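/- Let t ≥ 1 and let G be an m-vertex graph with no K_t-subdivision, with m ≤ t^2/5. If G is (1 - m/(2t^2), (20/11)t)-locally sparse, then G contains fewer than 2^{5t} cliques. -/

import Mathlib

set_option maxHeartbeats 1000000

/-- `G` contains a subdivision of `H`: an injective map of branch vertices together with
internally vertex-disjoint paths (whose internal vertices avoid branch vertices)
for each edge of `H`. -/
def ContainsSubdivision {V : Type*} {W : Type*} (G : SimpleGraph V) (H : SimpleGraph W) : Prop :=
  ∃ (f : W → V) (p : ∀ ⦃u v : W⦄, H.Adj u v → G.Walk (f u) (f v)),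
    Function.Injective f ∧
    (∀ (u v : W) (h : H.Adj u v), (p h).IsPath) ∧
    (∀ (u v : W) (h : H.Adj u v), ∀ x ∈ (p h).support.tail.dropLast, x ∉ Set.range f) ∧
    (∀ (u v u' v' : W) (h : H.Adj u v) (h' : H.Adj u' v'), s(u, v) ≠ s(u', v') →
      ∀ x ∈ (p h).support.tail.dropLast, x ∉ (p h').support.tail.dropLast)

private lemma my_log_le_sqrt {w : ℝ} (hw : 0 < w) :
    Real.log w ≤ 2 / Real.exp 1 * Real.sqrt w := by
  have hz : 0 < Real.sqrt w := Real.sqrt_pos.2 hw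
  have he : 0 < Real.exp 1 := Real.exp_pos 1
  have h1 : Real.log (Real.sqrt w) ≤ Real.sqrt w / Real.exp 1 := by
    have h := Real.log_le_sub_one_of_pos (show 0 < Real.sqrt w / Real.exp 1 by positivity)
    rw [Real.log_div (ne_of_gt hz) (ne_of_gt he), Real.log_exp] at h
    linarith
  have h2 : Real.log w = 2 * Real.log (Real.sqrt w) := by
    conv_lhs => rw [← Real.sq_sqrt hw.le, Real.log_pow]
    push_cast; ring
  have h3 : 2 / Real.exp 1 * Real.sqrt w = 2 * (Real.sqrt w / Real.exp 1) := by ring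
  rw [h2, h3]
  linarith

private lemma my_key_numeric {x : ℝ} (hx0 : 0 < x) (hx : x ≤ 11/20) :
    (2:ℝ) ^ (-x) + x / 2 ≤ 1 := by
  have hlog2 := Real.log_two_gt_d9
  have hy : 0 < x * Real.log 2 := by positivity
  have h1 : (2:ℝ) ^ (-x) = Real.exp (-(x * Real.log 2)) := by
    rw [Real.rpow_def_of_pos (by norm_num : (0:ℝ) < 2)]
    ring_nf
  have h2 : Real.exp (-(x * Real.log 2)) ≤ 1 / (1 + x * Real.log 2) := by
    rw [Real.exp_neg, inv_eq_one_div]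
    apply one_div_le_one_div_of_le (by linarith)
    linarith [Real.add_one_le_exp (x * Real.log 2)]
  rw [h1]
  have h3 : 1 / (1 + x * Real.log 2) + x / 2 ≤ 1 := by
    rw [div_add_div _ _ (by linarith : (1 + x * Real.log 2) ≠ 0) (by norm_num : (2:ℝ) ≠ 0),
      div_le_one (by nlinarith)]
    nlinarith
  linarith

private lemma my_final_numeric {a b : ℝ} {J : ℕ} (ha : 1 ≤ a) (h1 : 20/11 * a ≤ b)
    (h2 : b ≤ a^2/5)
    (hJ : ((J:ℝ) - 1) ≤ 2*a^2/b * Real.log (11*b/(20*a))) :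
    (J:ℝ) * Real.log (2*b/a) < 24/11 * a * Real.log 2 := by
  have ha0 : 0 < a := by linarith
  have hb0 : 0 < b := by nlinarith
  have ha100 : 100/11 ≤ a := by nlinarith
  have hb_a : 20/11 ≤ b / a := (le_div_iff₀ ha0).mpr (by linarith)
  set L1 := Real.log (2*b/a) with hL1
  set L2 := Real.log (11*b/(20*a)) with hL2
  have hL1_0 : 0 ≤ L1 := Real.log_nonneg (by rw [le_div_iff₀ ha0]; nlinarith)
  have hL2_0 : 0 ≤ L2 := Real.log_nonneg (by rw [le_div_iff₀ (by positivity)]; nlinarith)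
  set w := Real.sqrt (11/10) * (b/a) with hw
  have hsq : Real.sqrt (11/10) ^ 2 = 11/10 := Real.sq_sqrt (by norm_num)
  have hsq1 : 1 ≤ Real.sqrt (11/10) := Real.one_le_sqrt.mpr (by norm_num)
  have hsqle : Real.sqrt (11/10) ≤ 1.049 := by
    rw [show (1.049:ℝ) = Real.sqrt (1.049^2) from (Real.sqrt_sq (by norm_num)).symm]
    exact Real.sqrt_le_sqrt (by norm_num)
  have hw1 : 1 ≤ w := by nlinarith
  have hw0 : 0 < w := by linarith
  have hsum : L1 + L2 = 2 * Real.log w := by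
    have harg : (2*b/a) * (11*b/(20*a)) = w^2 := by
      rw [hw, mul_pow, hsq]; field_simp; ring
    rw [hL1, hL2, ← Real.log_mul (by positivity) (by positivity), harg, Real.log_pow]
    push_cast; ring
  have hprod : L1 * L2 ≤ (Real.log w)^2 := by nlinarith [sq_nonneg (L1 - L2)]
  have he9 : (2.7182818283:ℝ) < Real.exp 1 := Real.exp_one_gt_d9
  have he : (2.718:ℝ) < Real.exp 1 := by linarith
  have he0 : (0:ℝ) < Real.exp 1 := Real.exp_pos 1
  have he2 : (7.387:ℝ) ≤ (Real.exp 1)^2 := by nlinarith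
  have hlogw : Real.log w ≤ 2 / Real.exp 1 * Real.sqrt w := my_log_le_sqrt hw0
  have hlogw0 : 0 ≤ Real.log w := Real.log_nonneg hw1
  have hsqw : Real.sqrt w ^ 2 = w := Real.sq_sqrt hw0.le
  have hlogw2 : (Real.log w)^2 ≤ 4 / (Real.exp 1)^2 * w := by
    have h := mul_self_le_mul_self hlogw0 hlogw
    calc (Real.log w)^2 = Real.log w * Real.log w := by ring
      _ ≤ (2 / Real.exp 1 * Real.sqrt w) * (2 / Real.exp 1 * Real.sqrt w) := h
      _ = 4 / (Real.exp 1)^2 * (Real.sqrt w ^ 2) := by ring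
      _ = 4 / (Real.exp 1)^2 * w := by rw [hsqw]
  have hT : 2*a^2/b * (L2 * L1) ≤ 8 * Real.sqrt (11/10) / (Real.exp 1)^2 * a := by
    have h4 : L2 * L1 ≤ 4 / (Real.exp 1)^2 * w := by
      rw [mul_comm]; exact hprod.trans hlogw2
    have h5 : 2*a^2/b * (L2 * L1) ≤ 2*a^2/b * (4 / (Real.exp 1)^2 * w) :=
      mul_le_mul_of_nonneg_left h4 (by positivity)
    calc 2*a^2/b * (L2 * L1) ≤ 2*a^2/b * (4 / (Real.exp 1)^2 * w) := h5
      _ = 8 * Real.sqrt (11/10) / (Real.exp 1)^2 * a := by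
          rw [hw]; field_simp; ring
  have hTnum : 8 * Real.sqrt (11/10) / (Real.exp 1)^2 * a ≤ 1.137 * a := by
    have h8 : 8 * Real.sqrt (11/10) / (Real.exp 1)^2 ≤ 1.137 := by
      rw [div_le_iff₀ (by positivity)]
      nlinarith
    nlinarith
  have hL1b : L1 ≤ 0.155 * a := by
    have harg : 2*b/a ≤ 2*a/5 := by
      rw [div_le_div_iff₀ ha0 (by norm_num : (0:ℝ) < 5)]; nlinarith
    have h6 : L1 ≤ 2 / Real.exp 1 * Real.sqrt (2*a/5) := by
      calc L1 ≤ 2 / Real.exp 1 * Real.sqrt (2*b/a) := my_log_le_sqrt (by positivity)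
        _ ≤ _ := mul_le_mul_of_nonneg_left (Real.sqrt_le_sqrt harg) (by positivity)
    have h7 : Real.sqrt (2*a/5) ≤ 0.21 * a := by
      rw [show (0.21*a:ℝ) = Real.sqrt ((0.21*a)^2) from (Real.sqrt_sq (by positivity)).symm]
      exact Real.sqrt_le_sqrt (by nlinarith)
    have h9 : a * 2.718 < a * Real.exp 1 := mul_lt_mul_of_pos_left he ha0
    calc L1 ≤ 2 / Real.exp 1 * Real.sqrt (2*a/5) := h6
      _ ≤ 2 / Real.exp 1 * (0.21 * a) := mul_le_mul_of_nonneg_left h7 (by positivity)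
      _ ≤ 0.155 * a := by
          rw [div_mul_eq_mul_div, div_le_iff₀ he0]; nlinarith
  have hJ' : (J:ℝ) ≤ 1 + 2*a^2/b * L2 := by linarith
  have hlog2 : (0.693:ℝ) < Real.log 2 := by linarith [Real.log_two_gt_d9]
  have h10 : a * 0.693 < a * Real.log 2 := mul_lt_mul_of_pos_left hlog2 ha0
  calc (J:ℝ) * L1 ≤ (1 + 2*a^2/b * L2) * L1 := mul_le_mul_of_nonneg_right hJ' hL1_0
    _ = L1 + 2*a^2/b * (L2 * L1) := by ring
    _ ≤ 0.155 * a + 1.137 * a := by linarith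
    _ < 24/11 * a * Real.log 2 := by nlinarith

private lemma aux_cnt_rec {V : Type*} [DecidableEq V] (G : SimpleGraph V) [DecidableRel G.Adj]
    [DecidablePred (fun s : Finset V => G.IsClique (s : Set V))]
    (X : Finset V) (v : V) :
    (X.powerset.filter (fun s : Finset V => G.IsClique (s : Set V))).card ≤
      ((X.erase v).powerset.filter (fun s : Finset V => G.IsClique (s : Set V))).card +
      ((X.filter (fun u => G.Adj v u)).powerset.filter
        (fun s : Finset V => G.IsClique (s : Set V))).card := by
  classical
  have hsplit := Finset.card_filter_add_card_filter_not
    (s := X.powerset.filter (fun s : Finset V => G.IsClique (s : Set V))) (p := fun s => v ∈ s)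
  rw [← hsplit]
  have h1 : ((X.powerset.filter (fun s : Finset V => G.IsClique (s : Set V))).filter
      (fun s => ¬ v ∈ s)).card ≤
      ((X.erase v).powerset.filter (fun s : Finset V => G.IsClique (s : Set V))).card := by
    apply Finset.card_le_card
    intro s hs
    simp only [Finset.mem_filter, Finset.mem_powerset] at hs ⊢
    exact ⟨Finset.subset_erase.mpr ⟨hs.1.1, hs.2⟩, hs.1.2⟩
  have h2 : ((X.powerset.filter (fun s : Finset V => G.IsClique (s : Set V))).filter
      (fun s => v ∈ s)).card ≤
      ((X.filter (fun u => G.Adj v u)).powerset.filter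
        (fun s : Finset V => G.IsClique (s : Set V))).card := by
    apply Finset.card_le_card_of_injOn (fun s => s.erase v)
    · intro s hs
      simp only [Finset.mem_coe, Finset.mem_filter, Finset.mem_powerset] at hs ⊢
      obtain ⟨⟨hsX, hscl⟩, hvs⟩ := hs
      refine ⟨?_, hscl.subset (by exact_mod_cast Finset.erase_subset v s)⟩
      intro u hu
      rw [Finset.mem_erase] at hu
      refine Finset.mem_filter.mpr ⟨hsX hu.2, ?_⟩
      exact hscl (by exact_mod_cast hvs) (by exact_mod_cast hu.2) (Ne.symm hu.1)
    · intro s1 hs1 s2 hs2 h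
      simp only [Finset.coe_filter, Set.mem_setOf_eq, Finset.mem_filter] at hs1 hs2
      simp only at h
      rw [← Finset.insert_erase hs1.2, h, Finset.insert_erase hs2.2]
  omega

private lemma aux_cnt_le_pow {V : Type*} [DecidableEq V] (G : SimpleGraph V)
    [DecidablePred (fun s : Finset V => G.IsClique (s : Set V))]
    (X : Finset V) :
    (X.powerset.filter (fun s : Finset V => G.IsClique (s : Set V))).card ≤ 2 ^ X.card := by
  calc (X.powerset.filter (fun s : Finset V => G.IsClique (s : Set V))).card
      ≤ X.powerset.card := Finset.card_filter_le _ _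
    _ = 2 ^ X.card := Finset.card_powerset X

/-- If `G` is an `m`-vertex graph with no `K_t`-subdivision, `m ≤ t^2/5`, and `G` is
`(1 - m/(2t^2), (20/11)t)`-locally sparse, then `G` has fewer than `2^{5t}` cliques. -/
theorem clique_count_of_locally_sparse {V : Type*} [Fintype V] [DecidableEq V]
    (G : SimpleGraph V) [DecidableRel G.Adj] {t m : ℕ} (ht : 1 ≤ t)
    (hm : Fintype.card V = m) (hmt : (m : ℝ) ≤ t ^ 2 / 5)
    (hsub : ¬ ContainsSubdivision G (⊤ : SimpleGraph (Fin t)))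
    (hsparse : ∀ X : Finset V, (20 : ℝ) / 11 * t ≤ X.card →
      ∃ v ∈ X, ((X.filter (fun u => G.Adj v u)).card : ℝ) ≤
        (1 - m / (2 * t ^ 2)) * X.card) :
    Nat.card {s : Finset V // G.IsClique (s : Set V)} < 2 ^ (5 * t) := by
  classical
  have ha1 : (1:ℝ) ≤ (t:ℝ) := by exact_mod_cast ht
  have ht0 : (0:ℝ) < (t:ℝ) := by linarith
  have hNat : Nat.card {s : Finset V // G.IsClique (s : Set V)} =
      ((Finset.univ : Finset V).powerset.filter
        (fun s : Finset V => G.IsClique (s : Set V))).card := by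
    rw [Nat.card_eq_fintype_card, Finset.powerset_univ, Fintype.card_subtype]
  rw [hNat]
  have hcardV : (Finset.univ : Finset V).card = m := by rw [Finset.card_univ, hm]
  by_cases hcase : (20:ℝ)/11 * (t:ℝ) ≤ (m:ℝ)
  swap
  · -- trivial case : m < (20/11) t
    push_neg at hcase
    have hm5 : m < 5 * t := by
      have h : (m:ℝ) < 5 * t := by nlinarith
      exact_mod_cast h
    calc ((Finset.univ : Finset V).powerset.filter
          (fun s : Finset V => G.IsClique (s : Set V))).card
        ≤ 2 ^ (Finset.univ : Finset V).card := aux_cnt_le_pow G _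
      _ = 2 ^ m := by rw [hcardV]
      _ < 2 ^ (5 * t) := Nat.pow_lt_pow_right one_lt_two hm5
  · -- main case
    have hb1 : (1:ℝ) ≤ (m:ℝ) := by nlinarith
    have hm0 : (0:ℝ) < (m:ℝ) := by linarith
    set β : ℝ := 1 - (m:ℝ) / (2 * (t:ℝ) ^ 2) with hβdef
    have ht2 : (0:ℝ) < (t:ℝ)^2 := by positivity
    have hβpos : 0 < β := by
      have h : (m:ℝ) / (2 * (t:ℝ)^2) ≤ 1/10 := by
        rw [div_le_iff₀ (by positivity)]; nlinarith
      rw [hβdef]; linarith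
    have hβlt : β < 1 := by
      have h : 0 < (m:ℝ) / (2 * (t:ℝ)^2) := by positivity
      rw [hβdef]; linarith
    have hex : ∀ n : ℕ, ∃ j : ℕ, β ^ j * (n:ℝ) < 20/11 * (t:ℝ) := by
      intro n
      obtain ⟨j, hj⟩ := exists_pow_lt_of_lt_one
        (show (0:ℝ) < (20/11 * (t:ℝ)) / ((n:ℝ)+1) by positivity) hβlt
      refine ⟨j, ?_⟩
      have h1 : β ^ j * (n:ℝ) ≤ β ^ j * ((n:ℝ)+1) :=
        mul_le_mul_of_nonneg_left (by linarith) (pow_nonneg hβpos.le j)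
      have h2 : β ^ j * ((n:ℝ)+1) < ((20/11 * (t:ℝ)) / ((n:ℝ)+1)) * ((n:ℝ)+1) :=
        mul_lt_mul_of_pos_right hj (by positivity)
      rw [div_mul_cancel₀ _ (by positivity : ((n:ℝ)+1) ≠ 0)] at h2
      linarith
    set Jf : ℕ → ℕ := fun n => Nat.find (hex n) with hJfdef
    have hJf_spec : ∀ n : ℕ, β ^ (Jf n) * (n:ℝ) < 20/11 * (t:ℝ) := fun n => Nat.find_spec (hex n)
    have hJf_le : ∀ n j : ℕ, β ^ j * (n:ℝ) < 20/11 * (t:ℝ) → Jf n ≤ j :=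
      fun n j h => Nat.find_min' (hex n) h
    have hJf_mono : ∀ {d n : ℕ}, d ≤ n → Jf d ≤ Jf n := by
      intro d n hdn
      apply hJf_le
      have h1 : β ^ (Jf n) * (d:ℝ) ≤ β ^ (Jf n) * (n:ℝ) :=
        mul_le_mul_of_nonneg_left (by exact_mod_cast hdn) (pow_nonneg hβpos.le _)
      linarith [hJf_spec n]
    have hJf_pos : ∀ n : ℕ, 20/11 * (t:ℝ) ≤ (n:ℝ) → 1 ≤ Jf n := by
      intro n hn
      rcases Nat.eq_zero_or_pos (Jf n) with h0 | h; swap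
      · exact h
      exfalso
      have := hJf_spec n
      rw [h0, pow_zero, one_mul] at this
      linarith
    set x : ℝ := (t:ℝ) / (m:ℝ) with hxdef
    set K : ℝ := 2 * (m:ℝ) / (t:ℝ) with hKdef
    set A : ℝ := (2:ℝ) ^ ((20:ℝ)/11 * (t:ℝ)) with hAdef
    have hx0 : 0 < x := by rw [hxdef]; positivity
    have hx11 : x ≤ 11/20 := by
      rw [hxdef, div_le_iff₀ hm0]; nlinarith
    have hK1 : 1 ≤ K := by
      rw [hKdef, le_div_iff₀ ht0]; nlinarith
    have hK0 : 0 < K := by linarith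
    have hA1 : 1 ≤ A := by
      rw [hAdef, show (1:ℝ) = (2:ℝ) ^ (0:ℝ) from (Real.rpow_zero 2).symm]
      exact (Real.rpow_le_rpow_left_iff one_lt_two).mpr (by positivity)
    have hA0 : 0 < A := by linarith
    have hKx : K * (x/2) = 1 := by
      rw [hKdef, hxdef]; field_simp
    -- the main induction
    have main : ∀ n : ℕ, ∀ X : Finset V, X.card ≤ n →
        ((X.powerset.filter (fun s : Finset V => G.IsClique (s : Set V))).card : ℝ) ≤
          A * K ^ (Jf X.card) * (2:ℝ) ^ (x * (X.card:ℝ)) := by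
      have hbase : ∀ X : Finset V, ((X.card:ℝ) < 20/11 * (t:ℝ)) →
          ((X.powerset.filter (fun s : Finset V => G.IsClique (s : Set V))).card : ℝ) ≤
            A * K ^ (Jf X.card) * (2:ℝ) ^ (x * (X.card:ℝ)) := by
        intro X hX
        have h1 : ((X.powerset.filter (fun s : Finset V => G.IsClique (s : Set V))).card : ℝ) ≤
            (2:ℝ) ^ (X.card : ℕ) := by exact_mod_cast aux_cnt_le_pow G X
        have h2 : (2:ℝ) ^ (X.card : ℕ) = (2:ℝ) ^ ((X.card : ℕ) : ℝ) :=
          (Real.rpow_natCast 2 X.card).symm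
        have h3 : (2:ℝ) ^ ((X.card : ℕ) : ℝ) ≤ A := by
          rw [hAdef]
          exact (Real.rpow_le_rpow_left_iff one_lt_two).mpr hX.le
        have h4 : 1 ≤ K ^ (Jf X.card) := one_le_pow₀ hK1
        have h5 : (1:ℝ) ≤ (2:ℝ) ^ (x * (X.card:ℝ)) := by
          rw [show (1:ℝ) = (2:ℝ) ^ (0:ℝ) from (Real.rpow_zero 2).symm]
          exact (Real.rpow_le_rpow_left_iff one_lt_two).mpr (by positivity)
        calc ((X.powerset.filter (fun s : Finset V => G.IsClique (s : Set V))).card : ℝ)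
            ≤ (2:ℝ) ^ (X.card : ℕ) := h1
          _ = (2:ℝ) ^ ((X.card : ℕ) : ℝ) := h2
          _ ≤ A := h3
          _ = A * 1 * 1 := by ring
          _ ≤ A * K ^ (Jf X.card) * (2:ℝ) ^ (x * (X.card:ℝ)) := by
              apply mul_le_mul (mul_le_mul_of_nonneg_left h4 hA0.le) h5 (by norm_num)
              positivity
      intro n
      induction n with
      | zero =>
        intro X hX
        apply hbase
        have : X.card = 0 := Nat.le_zero.mp hX
        rw [this]; push_cast; positivity
      | succ n ih =>
        intro X hX
        by_cases hsmall : (X.card:ℝ) < 20/11 * (t:ℝ)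
        · exact hbase X hsmall
        · push_neg at hsmall
          obtain ⟨v, hv, hd⟩ := hsparse X hsmall
          have hn₁ : 1 ≤ X.card := Finset.card_pos.mpr ⟨v, hv⟩
          set n₁ := X.card with hn₁def
          set D := X.filter (fun u => G.Adj v u) with hDdef
          set E := X.erase v with hEdef
          have hEcard : E.card = n₁ - 1 := Finset.card_erase_of_mem hv
          have hDE : D ⊆ E := by
            intro u hu
            rw [hDdef, Finset.mem_filter] at hu
            exact Finset.mem_erase.mpr ⟨(G.ne_of_adj hu.2).symm, hu.1⟩
          have hDcard : D.card ≤ n₁ - 1 := hEcard ▸ Finset.card_le_card hDE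
          have hrec := aux_cnt_rec G X v
          have hihE := ih E (by omega)
          have hihD := ih D (by omega)
          set J' := Jf n₁ with hJ'def
          have hJ'1 : 1 ≤ J' := hJf_pos n₁ hsmall
          -- bounds on the two terms
          have hcast1 : ((n₁ - 1 : ℕ) : ℝ) = (n₁:ℝ) - 1 := by
            push_cast [hn₁]; ring
          have hKm1 : K ^ (Jf E.card) ≤ K ^ J' := by
            apply pow_le_pow_right₀ hK1
            rw [hEcard]
            exact hJf_mono (by omega)
          have hE2 : (2:ℝ) ^ (x * (E.card:ℝ)) = (2:ℝ) ^ (x * (n₁:ℝ)) * (2:ℝ) ^ (-x) := by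
            rw [hEcard, hcast1, ← Real.rpow_add (by norm_num : (0:ℝ) < 2)]
            ring_nf
          have hboundE : (((E.powerset.filter
              (fun s : Finset V => G.IsClique (s : Set V))).card : ℕ) : ℝ) ≤
              A * K ^ J' * (2:ℝ) ^ (x * (n₁:ℝ)) * (2:ℝ) ^ (-x) := by
            refine hihE.trans ?_
            rw [hE2]
            have hp1 : (0:ℝ) < (2:ℝ) ^ (x * (n₁:ℝ)) * (2:ℝ) ^ (-x) := by positivity
            have := mul_le_mul_of_nonneg_right
              (mul_le_mul_of_nonneg_left hKm1 hA0.le) hp1.le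
            calc A * K ^ (Jf E.card) * ((2:ℝ) ^ (x * (n₁:ℝ)) * (2:ℝ) ^ (-x))
                ≤ A * K ^ J' * ((2:ℝ) ^ (x * (n₁:ℝ)) * (2:ℝ) ^ (-x)) := by
                  rw [mul_assoc, mul_assoc] at this ⊢; exact this
              _ = A * K ^ J' * (2:ℝ) ^ (x * (n₁:ℝ)) * (2:ℝ) ^ (-x) := by ring
          -- D bound
          have hJfD : Jf D.card ≤ J' - 1 := by
            apply hJf_le
            have hdd : (D.card : ℝ) ≤ β * (n₁:ℝ) := by
              rw [hDdef]
              calc ((X.filter (fun u => G.Adj v u)).card : ℝ)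
                  ≤ (1 - (m:ℝ) / (2 * (t:ℝ) ^ 2)) * (X.card:ℝ) := hd
                _ = β * (n₁:ℝ) := by rw [hβdef, hn₁def]
            have h1 : β ^ (J' - 1) * (D.card:ℝ) ≤ β ^ (J' - 1) * (β * (n₁:ℝ)) :=
              mul_le_mul_of_nonneg_left hdd (pow_nonneg hβpos.le _)
            have h2 : β ^ (J' - 1) * (β * (n₁:ℝ)) = β ^ J' * (n₁:ℝ) := by
              rw [← mul_assoc, ← pow_succ]
              congr 2
              omega
            rw [h2] at h1
            exact lt_of_le_of_lt h1 (hJf_spec n₁)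
          have hKD : K ^ (Jf D.card) ≤ K ^ J' * (x/2) := by
            have h1 : K ^ (Jf D.card) ≤ K ^ (J' - 1) := pow_le_pow_right₀ hK1 hJfD
            have h2 : K ^ (J' - 1) * (K * (x/2)) = K ^ J' * (x/2) := by
              rw [← mul_assoc, ← pow_succ]
              congr 2
              omega
            rw [hKx, mul_one] at h2
            rw [h2] at h1
            exact h1
          have hD2 : (2:ℝ) ^ (x * (D.card:ℝ)) ≤ (2:ℝ) ^ (x * (n₁:ℝ)) := by
            apply (Real.rpow_le_rpow_left_iff one_lt_two).mpr
            have : (D.card:ℝ) ≤ (n₁:ℝ) := by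
              have : D.card ≤ n₁ := by omega
              exact_mod_cast this
            nlinarith
          have hboundD : (((D.powerset.filter
              (fun s : Finset V => G.IsClique (s : Set V))).card : ℕ) : ℝ) ≤
              A * K ^ J' * (2:ℝ) ^ (x * (n₁:ℝ)) * (x/2) := by
            refine hihD.trans ?_
            have hp2 : (0:ℝ) ≤ (2:ℝ) ^ (x * (D.card:ℝ)) := by positivity
            calc A * K ^ (Jf D.card) * (2:ℝ) ^ (x * (D.card:ℝ))
                ≤ A * (K ^ J' * (x/2)) * (2:ℝ) ^ (x * (n₁:ℝ)) := by
                  apply mul_le_mul (mul_le_mul_of_nonneg_left hKD hA0.le) hD2 hp2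
                  positivity
              _ = A * K ^ J' * (2:ℝ) ^ (x * (n₁:ℝ)) * (x/2) := by ring
          -- combine
          have hkey := my_key_numeric hx0 hx11
          have hpos : (0:ℝ) ≤ A * K ^ J' * (2:ℝ) ^ (x * (n₁:ℝ)) := by positivity
          calc ((X.powerset.filter (fun s : Finset V => G.IsClique (s : Set V))).card : ℝ)
              ≤ (((E.powerset.filter (fun s : Finset V => G.IsClique (s : Set V))).card : ℕ) : ℝ)
                + (((D.powerset.filter
                    (fun s : Finset V => G.IsClique (s : Set V))).card : ℕ) : ℝ) := by
                exact_mod_cast hrec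
            _ ≤ A * K ^ J' * (2:ℝ) ^ (x * (n₁:ℝ)) * (2:ℝ) ^ (-x)
                + A * K ^ J' * (2:ℝ) ^ (x * (n₁:ℝ)) * (x/2) := add_le_add hboundE hboundD
            _ = A * K ^ J' * (2:ℝ) ^ (x * (n₁:ℝ)) * ((2:ℝ) ^ (-x) + x/2) := by ring
            _ ≤ A * K ^ J' * (2:ℝ) ^ (x * (n₁:ℝ)) * 1 := by
                apply mul_le_mul_of_nonneg_left hkey hpos
            _ = A * K ^ J' * (2:ℝ) ^ (x * (n₁:ℝ)) := by ring
    -- conclude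
    have hfin := main m Finset.univ (le_of_eq hcardV)
    rw [hcardV] at hfin
    set J := Jf m with hJdef
    have hJ1 : 1 ≤ J := hJf_pos m hcase
    -- bound on J
    have hJbound : ((J:ℝ) - 1) ≤ 2*(t:ℝ)^2/(m:ℝ) * Real.log (11*(m:ℝ)/(20*(t:ℝ))) := by
      have hnot : ¬ (β ^ (J - 1) * (m:ℝ) < 20/11 * (t:ℝ)) := by
        apply Nat.find_min (hex m)
        have hJr : J = Nat.find (hex m) := rfl
        omega
      push_neg at hnot
      have hβJ : (0:ℝ) < β ^ (J - 1) := pow_pos hβpos _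
      have hlog1 : Real.log (20/11 * (t:ℝ)) ≤ Real.log (β ^ (J - 1) * (m:ℝ)) :=
        Real.log_le_log (by positivity) hnot
      rw [Real.log_mul (ne_of_gt hβJ) (ne_of_gt hm0), Real.log_pow] at hlog1
      have hcastJ : ((J - 1 : ℕ) : ℝ) = (J:ℝ) - 1 := by push_cast [hJ1]; ring
      rw [hcastJ] at hlog1
      have hlogβ : Real.log β ≤ β - 1 := Real.log_le_sub_one_of_pos hβpos
      have hβval : 1 - β = (m:ℝ) / (2 * (t:ℝ)^2) := by rw [hβdef]; ring
      have hJ0 : (0:ℝ) ≤ (J:ℝ) - 1 := by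
        have : (1:ℝ) ≤ (J:ℝ) := by exact_mod_cast hJ1
        linarith
      have hmain : ((J:ℝ) - 1) * ((m:ℝ) / (2 * (t:ℝ)^2)) ≤
          Real.log ((m:ℝ)) - Real.log (20/11 * (t:ℝ)) := by
        have h1 : ((J:ℝ) - 1) * ((m:ℝ) / (2 * (t:ℝ)^2)) = ((J:ℝ) - 1) * (1 - β) := by
          rw [hβval]
        have h6 : ((J:ℝ) - 1) * (1 - β) ≤ ((J:ℝ) - 1) * (- Real.log β) := by
          apply mul_le_mul_of_nonneg_left _ hJ0
          linarith
        rw [h1]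
        calc ((J:ℝ) - 1) * (1 - β) ≤ ((J:ℝ) - 1) * (- Real.log β) := h6
          _ = -(((J:ℝ) - 1) * Real.log β) := by ring
          _ ≤ Real.log ((m:ℝ)) - Real.log (20/11 * (t:ℝ)) := by linarith [hlog1]
      have hlogq : Real.log ((m:ℝ)) - Real.log (20/11 * (t:ℝ)) =
          Real.log (11*(m:ℝ)/(20*(t:ℝ))) := by
        rw [← Real.log_div (ne_of_gt hm0) (by positivity)]
        congr 1
        field_simp
      rw [hlogq] at hmain
      have hfact : (0:ℝ) < 2*(t:ℝ)^2/(m:ℝ) := by positivity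
      have := mul_le_mul_of_nonneg_left hmain hfact.le
      calc (J:ℝ) - 1 = 2*(t:ℝ)^2/(m:ℝ) * (((J:ℝ) - 1) * ((m:ℝ) / (2 * (t:ℝ)^2))) := by
            field_simp
        _ ≤ 2*(t:ℝ)^2/(m:ℝ) * Real.log (11*(m:ℝ)/(20*(t:ℝ))) := this
    have hnum := my_final_numeric ha1 hcase hmt hJbound
    have hKJ : K ^ J < (2:ℝ) ^ ((24:ℝ)/11 * (t:ℝ)) := by
      rw [← Real.log_lt_log_iff (by positivity) (Real.rpow_pos_of_pos two_pos _),
        Real.log_pow, Real.log_rpow two_pos, hKdef]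
      calc (J:ℝ) * Real.log (2*(m:ℝ)/(t:ℝ)) < 24/11 * (t:ℝ) * Real.log 2 := hnum
        _ = 24/11 * (t:ℝ) * Real.log 2 := rfl
    have hxm : x * (m:ℝ) = (t:ℝ) := by
      rw [hxdef]; field_simp
    have hfinal : ((Finset.univ : Finset V).powerset.filter
        (fun s : Finset V => G.IsClique (s : Set V))).card <
        ((2 ^ (5 * t) : ℕ) : ℝ) := by
      calc (((Finset.univ : Finset V).powerset.filter
            (fun s : Finset V => G.IsClique (s : Set V))).card : ℝ)
          ≤ A * K ^ J * (2:ℝ) ^ (x * (m:ℝ)) := hfin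
        _ < A * (2:ℝ) ^ ((24:ℝ)/11 * (t:ℝ)) * (2:ℝ) ^ (x * (m:ℝ)) := by
            have hp : (0:ℝ) < (2:ℝ) ^ (x * (m:ℝ)) := Real.rpow_pos_of_pos two_pos _
            apply mul_lt_mul_of_pos_right _ hp
            exact mul_lt_mul_of_pos_left hKJ hA0
        _ = (2:ℝ) ^ ((5 * t : ℕ) : ℝ) := by
            rw [hxm, hAdef, ← Real.rpow_add two_pos, ← Real.rpow_add two_pos]
            congr 1
            push_cast
            ring
        _ = ((2 ^ (5 * t) : ℕ) : ℝ) := by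
            rw [Real.rpow_natCast]
            push_cast
            ring
    exact_mod_cast hfinal
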